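/- If a Smale space $(X,\phi)$ is irreducible and $X$ is infinite, then $(X,\phi)$ is $(s,u)$-essentially free: for every $(p,q) \in \mathbb{Z}^2$ with $(p,q) \neq (0,0)$, the interior of the set $\{x \in X \mid (\phi^p(x),x) \in G_\phi^s \text{ and } (\phi^q(x),x) \in G_\phi^u\}$ is empty. -/

import Mathlib

open scoped Topology

/-- A Smale space: a compact metric space `X` with a homeomorphism `phi`, constants
`eps0 > 0`, `0 < lam0 < 1`, and a bracket map satisfying (SS1) and (SS2). -/
structure SmaleSpace (X : Type*) [MetricSpace X] [CompactSpace X] where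
  phi : X ≃ₜ X
  eps0 : ℝ
  eps0_pos : 0 < eps0
  lam0 : ℝ
  lam0_pos : 0 < lam0
  lam0_lt_one : lam0 < 1
  br : X → X → X
  br_continuousOn :
    ContinuousOn (fun p : X × X => br p.1 p.2) {p : X × X | dist p.1 p.2 < eps0}
  br_self : ∀ x, br x x = x
  br_assoc₁ : ∀ x y z, dist x y < eps0 → dist y z < eps0 → dist x z < eps0 →
      dist (br x y) z < eps0 → dist x (br y z) < eps0 →
      br (br x y) z = br x z
  br_assoc₂ : ∀ x y z, dist x y < eps0 → dist y z < eps0 → dist x z < eps0 →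
      dist (br x y) z < eps0 → dist x (br y z) < eps0 →
      br x (br y z) = br x z
  br_phi : ∀ x y, dist x y < eps0 → dist (phi x) (phi y) < eps0 →
      br (phi x) (phi y) = phi (br x y)
  contract_s : ∀ x, ∀ ε : ℝ, 0 < ε → ε ≤ eps0 → ∀ y z,
      br y x = y → dist x y < ε → br z x = z → dist x z < ε →
      dist (phi y) (phi z) ≤ lam0 * dist y z
  contract_u : ∀ x, ∀ ε : ℝ, 0 < ε → ε ≤ eps0 → ∀ y z,
      br x y = y → dist x y < ε → br x z = z → dist x z < ε →
      dist (phi.symm y) (phi.symm z) ≤ lam0 * dist y z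

namespace SmaleSpace

variable {X : Type*} [MetricSpace X] [CompactSpace X] (S : SmaleSpace X)

/-- the `n`-th power `φ^n` of the homeomorphism, `n ∈ ℤ`. -/
def zp (n : ℤ) (x : X) : X := (S.phi.toEquiv ^ n) x

/-- local stable set `X^s(x, ε)`. -/
def stableSet (x : X) (ε : ℝ) : Set X := {y | S.br y x = y ∧ dist x y < ε}

/-- local unstable set `X^u(x, ε)`. -/
def unstableSet (x : X) (ε : ℝ) : Set X := {y | S.br x y = y ∧ dist x y < ε}

def Gs0 : Set (X × X) := {p | p.2 ∈ S.stableSet p.1 S.eps0}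

def Gu0 : Set (X × X) := {p | p.2 ∈ S.unstableSet p.1 S.eps0}

def GsN (n : ℕ) : Set (X × X) := {p | (S.zp n p.1, S.zp n p.2) ∈ S.Gs0}

def GuN (n : ℕ) : Set (X × X) := {p | (S.zp (-(n : ℤ)) p.1, S.zp (-(n : ℤ)) p.2) ∈ S.Gu0}

def GaN (n : ℕ) : Set (X × X) := S.GsN n ∩ S.GuN n

/-- the stable equivalence relation `G_φ^s`. -/
def Gs : Set (X × X) :=
  {p | Filter.Tendsto (fun n : ℕ => dist (S.zp n p.1) (S.zp n p.2)) Filter.atTop (𝓝 0)}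

/-- the unstable equivalence relation `G_φ^u`. -/
def Gu : Set (X × X) :=
  {p | Filter.Tendsto (fun n : ℕ => dist (S.zp (-(n : ℤ)) p.1) (S.zp (-(n : ℤ)) p.2))
        Filter.atTop (𝓝 0)}

/-- the asymptotic equivalence relation `G_φ^a`. -/
def Ga : Set (X × X) := S.Gs ∩ S.Gu

/-- irreducibility of a Smale space. -/
def Irred : Prop := ∀ U V : Set X, IsOpen U → IsOpen V → U.Nonempty → V.Nonempty →
  ∃ K : ℕ, (S.zp K '' U ∩ V).Nonempty

end SmaleSpace

/-- the cocycle sums `f^n` of a function `f : X → ℤ` along a bijection `φ`. -/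
def birkhoff {X : Type*} (φ : Equiv.Perm X) (f : X → ℤ) (n : ℤ) (x : X) : ℤ :=
  if 0 ≤ n then ∑ i ∈ Finset.range n.toNat, f ((φ ^ (i : ℤ)) x)
  else -∑ i ∈ Finset.range (-n).toNat, f ((φ ^ (n + (i : ℤ))) x)


namespace SmaleSpace

open Filter Metric

variable {X : Type*} [MetricSpace X] [CompactSpace X] (S : SmaleSpace X)

lemma zp_zero' (x : X) : S.zp 0 x = x := rfl

lemma zp_add' (j k : ℤ) (x : X) : S.zp (j + k) x = S.zp j (S.zp k x) := by
  simp [zp, zpow_add, Equiv.Perm.mul_apply]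

lemma zp_one' (x : X) : S.zp 1 x = S.phi x := by simp [zp]

lemma zp_succ' (k : ℤ) (x : X) : S.zp (k + 1) x = S.phi (S.zp k x) := by
  rw [add_comm, zp_add', zp_one']

lemma zp_pred' (k : ℤ) (x : X) : S.zp (k - 1) x = S.phi.symm (S.zp k x) := by
  have : S.phi (S.zp (k - 1) x) = S.zp k x := by
    rw [← zp_succ', sub_add_cancel]
  rw [← this, Homeomorph.symm_apply_apply]

lemma phi_symm_zp (k : ℤ) (x : X) : S.phi.symm (S.zp (k + 1) x) = S.zp k x := by
  rw [zp_succ', Homeomorph.symm_apply_apply]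

lemma continuous_zp (k : ℤ) : Continuous (S.zp k) := by
  induction k using Int.induction_on with
  | zero => simpa using continuous_id.congr (fun x => (S.zp_zero' x).symm)
  | succ n ih =>
    have h : ∀ x, S.zp (n + 1) x = S.phi (S.zp n x) := fun x => S.zp_succ' n x
    exact (S.phi.continuous.comp ih).congr (fun x => (h x).symm)
  | pred n ih =>
    have h : ∀ x, S.zp (-n - 1) x = S.phi.symm (S.zp (-n) x) := fun x => S.zp_pred' (-n) x
    exact (S.phi.symm.continuous.comp ih).congr (fun x => (h x).symm)

/-- `φ^k` as a homeomorphism. -/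
def zph (k : ℤ) : X ≃ₜ X where
  toEquiv := S.phi.toEquiv ^ k
  continuous_toFun := S.continuous_zp k
  continuous_invFun := by
    have h : ∀ x, (S.phi.toEquiv ^ k).invFun x = S.zp (-k) x := by
      intro x
      show ⇑(S.phi.toEquiv ^ k)⁻¹ x = _
      rw [← zpow_neg]
      rfl
    exact (S.continuous_zp (-k)).congr (fun x => (h x).symm)

lemma isOpenMap_zp (k : ℤ) : IsOpenMap (S.zp k) := (S.zph k).isOpenMap

lemma br_phi_symm (x y : X) (h1 : dist x y < S.eps0)
    (h2 : dist (S.phi.symm x) (S.phi.symm y) < S.eps0) :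
    S.br (S.phi.symm x) (S.phi.symm y) = S.phi.symm (S.br x y) := by
  have h := S.br_phi (S.phi.symm x) (S.phi.symm y) h2 (by
    simpa [Homeomorph.apply_symm_apply] using h1)
  rw [S.phi.apply_symm_apply, S.phi.apply_symm_apply] at h
  rw [h, Homeomorph.symm_apply_apply]

/-- Lemma A: the bracket is near the diagonal close to the identity. -/
lemma exists_br_delta : ∃ δ : ℝ, 0 < δ ∧ δ ≤ S.eps0 / 8 ∧
    ∀ a b : X, dist a b < δ → dist (S.br a b) a < S.eps0 / 8 := by
  have he := S.eps0_pos
  set K : Set (X × X) := {q : X × X | dist q.1 q.2 ≤ S.eps0 / 2} with hK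
  have hKc : IsCompact K :=
    (isClosed_le (continuous_fst.dist continuous_snd) continuous_const).isCompact
  have hcont : ContinuousOn (fun q : X × X => S.br q.1 q.2) K :=
    S.br_continuousOn.mono (fun q hq => by
      simp only [hK, Set.mem_setOf_eq] at hq ⊢
      linarith)
  have huc := hKc.uniformContinuousOn_of_continuous hcont
  rw [Metric.uniformContinuousOn_iff] at huc
  obtain ⟨δ, hδ0, H⟩ := huc (S.eps0 / 8) (by linarith)
  refine ⟨min δ (S.eps0 / 8), lt_min hδ0 (by linarith), min_le_right _ _, ?_⟩
  intro a b hab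
  have hab' : dist a b < S.eps0 / 8 := lt_of_lt_of_le hab (min_le_right _ _)
  have h1 : (a, b) ∈ K := by
    simp only [hK, Set.mem_setOf_eq]
    linarith
  have h2 : (a, a) ∈ K := by
    simp only [hK, Set.mem_setOf_eq, dist_self]
    linarith
  have h3 : dist ((a, b) : X × X) ((a, a) : X × X) < δ := by
    rw [Prod.dist_eq]
    simp only [dist_self]
    rw [max_lt_iff]
    exact ⟨hδ0, lt_of_lt_of_le (by rwa [dist_comm]) (min_le_left _ _)⟩
  have := H _ h1 _ h2 h3
  simpa [S.br_self] using this

/-- Lemma B: contraction along stable sets, forward in time. -/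
lemma stable_iter (c : ℝ) (hc : c < S.eps0) (x y : X)
    (hbr : S.br y x = y) (hd : dist x y ≤ c) : ∀ n : ℕ,
    S.br (S.zp n y) (S.zp n x) = S.zp n y ∧
      dist (S.zp n x) (S.zp n y) ≤ S.lam0 ^ n * dist x y := by
  have hl0 := S.lam0_pos
  have hl1 := S.lam0_lt_one
  intro n
  induction n with
  | zero => simpa [zp_zero'] using hbr
  | succ n ih =>
    obtain ⟨hb, hdist⟩ := ih
    have hpow : S.lam0 ^ n * dist x y ≤ dist x y :=
      mul_le_of_le_one_left dist_nonneg (pow_le_one₀ hl0.le hl1.le)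
    have hdn : dist (S.zp n x) (S.zp n y) < S.eps0 :=
      lt_of_le_of_lt (hdist.trans (hpow.trans hd)) hc
    have hstep := S.contract_s (S.zp n x) S.eps0 S.eps0_pos le_rfl
      (S.zp n y) (S.zp n x) hb hdn (S.br_self _) (by simpa using S.eps0_pos)
    have hsucc1 : S.zp (n + 1 : ℕ) x = S.phi (S.zp n x) := by
      push_cast; rw [zp_succ']
    have hsucc2 : S.zp (n + 1 : ℕ) y = S.phi (S.zp n y) := by
      push_cast; rw [zp_succ']
    have hdist' : dist (S.zp (n + 1 : ℕ) x) (S.zp (n + 1 : ℕ) y)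
        ≤ S.lam0 ^ (n + 1) * dist x y := by
      rw [hsucc1, hsucc2, dist_comm (S.phi (S.zp n x))]
      calc dist (S.phi (S.zp n y)) (S.phi (S.zp n x))
          ≤ S.lam0 * dist (S.zp n y) (S.zp n x) := hstep
        _ = S.lam0 * dist (S.zp n x) (S.zp n y) := by rw [dist_comm]
        _ ≤ S.lam0 * (S.lam0 ^ n * dist x y) := by
            exact mul_le_mul_of_nonneg_left hdist hl0.le
        _ = S.lam0 ^ (n + 1) * dist x y := by ring
    refine ⟨?_, hdist'⟩
    have hlt' : dist (S.zp (n + 1 : ℕ) x) (S.zp (n + 1 : ℕ) y) < S.eps0 := by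
      refine lt_of_le_of_lt (hdist'.trans ?_) hc
      exact (mul_le_of_le_one_left dist_nonneg (pow_le_one₀ hl0.le hl1.le)).trans hd
    have := S.br_phi (S.zp n y) (S.zp n x) (by rwa [dist_comm])
      (by rw [← hsucc1, ← hsucc2]; rwa [dist_comm])
    rw [hb] at this
    rw [hsucc1, hsucc2]
    exact this

/-- Lemma B': contraction along unstable sets, backward in time. -/
lemma unstable_iter (c : ℝ) (hc : c < S.eps0) (x y : X)
    (hbr : S.br x y = y) (hd : dist x y ≤ c) : ∀ n : ℕ,
    S.br (S.zp (-(n : ℤ)) x) (S.zp (-(n : ℤ)) y) = S.zp (-(n : ℤ)) y ∧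
      dist (S.zp (-(n : ℤ)) x) (S.zp (-(n : ℤ)) y) ≤ S.lam0 ^ n * dist x y := by
  have hl0 := S.lam0_pos
  have hl1 := S.lam0_lt_one
  intro n
  induction n with
  | zero => simpa [zp_zero'] using hbr
  | succ n ih =>
    obtain ⟨hb, hdist⟩ := ih
    have hpow : S.lam0 ^ n * dist x y ≤ dist x y :=
      mul_le_of_le_one_left dist_nonneg (pow_le_one₀ hl0.le hl1.le)
    have hdn : dist (S.zp (-(n : ℤ)) x) (S.zp (-(n : ℤ)) y) < S.eps0 :=
      lt_of_le_of_lt (hdist.trans (hpow.trans hd)) hc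
    have hstep := S.contract_u (S.zp (-(n : ℤ)) x) S.eps0 S.eps0_pos le_rfl
      (S.zp (-(n : ℤ)) y) (S.zp (-(n : ℤ)) x) hb hdn (S.br_self _) (by simpa using S.eps0_pos)
    have hsucc1 : S.zp (-((n : ℕ) + 1 : ℕ) : ℤ) x = S.phi.symm (S.zp (-(n : ℤ)) x) := by
      push_cast
      rw [show (-((n : ℤ) + 1)) = (-(n : ℤ)) - 1 by ring, zp_pred']
    have hsucc2 : S.zp (-((n : ℕ) + 1 : ℕ) : ℤ) y = S.phi.symm (S.zp (-(n : ℤ)) y) := by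
      push_cast
      rw [show (-((n : ℤ) + 1)) = (-(n : ℤ)) - 1 by ring, zp_pred']
    have hdist' : dist (S.zp (-((n : ℕ) + 1 : ℕ) : ℤ) x) (S.zp (-((n : ℕ) + 1 : ℕ) : ℤ) y)
        ≤ S.lam0 ^ (n + 1) * dist x y := by
      rw [hsucc1, hsucc2, dist_comm (S.phi.symm (S.zp (-(n : ℤ)) x))]
      calc dist (S.phi.symm (S.zp (-(n : ℤ)) y)) (S.phi.symm (S.zp (-(n : ℤ)) x))
          ≤ S.lam0 * dist (S.zp (-(n : ℤ)) y) (S.zp (-(n : ℤ)) x) := hstep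
        _ = S.lam0 * dist (S.zp (-(n : ℤ)) x) (S.zp (-(n : ℤ)) y) := by rw [dist_comm]
        _ ≤ S.lam0 * (S.lam0 ^ n * dist x y) := mul_le_mul_of_nonneg_left hdist hl0.le
        _ = S.lam0 ^ (n + 1) * dist x y := by ring
    refine ⟨?_, hdist'⟩
    have hlt' : dist (S.zp (-((n : ℕ) + 1 : ℕ) : ℤ) x) (S.zp (-((n : ℕ) + 1 : ℕ) : ℤ) y)
        < S.eps0 := by
      refine lt_of_le_of_lt (hdist'.trans ?_) hc
      exact (mul_le_of_le_one_left dist_nonneg (pow_le_one₀ hl0.le hl1.le)).trans hd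
    have := S.br_phi_symm (S.zp (-(n : ℤ)) x) (S.zp (-(n : ℤ)) y) hdn
      (by rw [← hsucc1, ← hsucc2]; exact hlt')
    rw [hb] at this
    rw [hsucc1, hsucc2]
    exact this

/-- Lemma C: two points on the same local unstable set which stay uniformly close
forward in time are equal. -/
lemma unstable_rigid (c : ℝ) (hc : c < S.eps0) (x y : X) (hbr : S.br x y = y)
    (h : ∀ n : ℕ, dist (S.zp n x) (S.zp n y) ≤ c) : x = y := by
  have hl0 := S.lam0_pos
  have hl1 := S.lam0_lt_one
  have hc0 : 0 ≤ c := le_trans dist_nonneg (by simpa [zp_zero'] using h 0)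
  have hsucc : ∀ (n : ℕ) (w : X), S.zp (n + 1 : ℕ) w = S.phi (S.zp n w) := by
    intro n w; push_cast; rw [zp_succ']
  have hrel : ∀ n : ℕ, S.br (S.zp n x) (S.zp n y) = S.zp n y := by
    intro n
    induction n with
    | zero => simpa [zp_zero'] using hbr
    | succ n ih =>
      rw [hsucc n x, hsucc n y]
      have := S.br_phi (S.zp n x) (S.zp n y) (lt_of_le_of_lt (h n) hc)
        (by rw [← hsucc n x, ← hsucc n y]; exact lt_of_le_of_lt (h (n + 1)) hc)
      rw [ih] at this
      exact this
  have hstepdown : ∀ n : ℕ,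
      dist (S.zp n x) (S.zp n y) ≤ S.lam0 * dist (S.zp (n + 1 : ℕ) x) (S.zp (n + 1 : ℕ) y) := by
    intro n
    have := S.contract_u (S.zp (n + 1 : ℕ) x) S.eps0 S.eps0_pos le_rfl
      (S.zp (n + 1 : ℕ) y) (S.zp (n + 1 : ℕ) x) (hrel (n + 1))
      (lt_of_le_of_lt (h (n + 1)) hc) (S.br_self _) (by simpa using S.eps0_pos)
    have e1 : S.phi.symm (S.zp (n + 1 : ℕ) x) = S.zp n x := by
      rw [hsucc n x, Homeomorph.symm_apply_apply]
    have e2 : S.phi.symm (S.zp (n + 1 : ℕ) y) = S.zp n y := by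
      rw [hsucc n y, Homeomorph.symm_apply_apply]
    rw [e1, e2] at this
    calc dist (S.zp n x) (S.zp n y) = dist (S.zp n y) (S.zp n x) := dist_comm _ _
      _ ≤ S.lam0 * dist (S.zp (n + 1 : ℕ) y) (S.zp (n + 1 : ℕ) x) := this
      _ = S.lam0 * dist (S.zp (n + 1 : ℕ) x) (S.zp (n + 1 : ℕ) y) := by rw [dist_comm]
  have hchain : ∀ n : ℕ, dist x y ≤ S.lam0 ^ n * dist (S.zp n x) (S.zp n y) := by
    intro n
    induction n with
    | zero => simp [zp_zero']
    | succ n ih =>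
      calc dist x y ≤ S.lam0 ^ n * dist (S.zp n x) (S.zp n y) := ih
        _ ≤ S.lam0 ^ n * (S.lam0 * dist (S.zp (n + 1 : ℕ) x) (S.zp (n + 1 : ℕ) y)) :=
            mul_le_mul_of_nonneg_left (hstepdown n) (pow_nonneg hl0.le n)
        _ = S.lam0 ^ (n + 1) * dist (S.zp (n + 1 : ℕ) x) (S.zp (n + 1 : ℕ) y) := by ring
  have hdown : ∀ n : ℕ, dist x y ≤ S.lam0 ^ n * c := by
    intro n
    exact (hchain n).trans (mul_le_mul_of_nonneg_left (h n) (pow_nonneg hl0.le n))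
  have hlim : Tendsto (fun n : ℕ => S.lam0 ^ n * c) atTop (nhds 0) := by
    simpa using (tendsto_pow_atTop_nhds_zero_of_lt_one hl0.le hl1).mul_const c
  have : dist x y ≤ 0 := ge_of_tendsto hlim (Filter.Eventually.of_forall hdown)
  exact dist_le_zero.mp this

/-- Lemma E: if `b` stays uniformly close to `a` forward in time and starts close,
then `b` is on the local stable set of `a`. -/
lemma forward_close (δ : ℝ) (hδ0 : 0 < δ) (hδe : δ ≤ S.eps0 / 8)
    (hbrd : ∀ a b : X, dist a b < δ → dist (S.br a b) a < S.eps0 / 8)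
    (a b : X) (h0 : dist a b < δ)
    (h : ∀ n : ℕ, dist (S.zp n a) (S.zp n b) ≤ S.eps0 / 8) :
    S.br b a = b := by
  have he := S.eps0_pos
  have hl0 := S.lam0_pos
  have hl1 := S.lam0_lt_one
  have hd0 : dist b a < δ := by rwa [dist_comm]
  have hw_b : dist (S.br b a) b < S.eps0 / 8 := hbrd b a hd0
  have hw_a : dist (S.br b a) a ≤ S.eps0 / 4 := by
    calc dist (S.br b a) a ≤ dist (S.br b a) b + dist b a := dist_triangle _ _ _
      _ ≤ S.eps0 / 8 + δ := add_le_add hw_b.le hd0.le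
      _ ≤ S.eps0 / 4 := by linarith
  -- bracket relations
  have hws : S.br (S.br b a) a = S.br b a :=
    S.br_assoc₁ b a a (by rw [dist_comm]; exact lt_of_lt_of_le h0 (by linarith))
      (by simpa using he) (by rw [dist_comm]; exact lt_of_lt_of_le h0 (by linarith))
      (lt_of_le_of_lt hw_a (by linarith))
      (by rw [S.br_self, dist_comm]; exact lt_of_lt_of_le h0 (by linarith))
  have hwu : S.br b (S.br b a) = S.br b a :=
    S.br_assoc₂ b b a (by simpa using he)
      (lt_of_lt_of_le hd0 (by linarith)) (lt_of_lt_of_le hd0 (by linarith))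
      (by rw [S.br_self]; exact lt_of_lt_of_le hd0 (by linarith))
      (by rw [dist_comm]; exact lt_of_le_of_lt hw_b.le (by linarith))
  -- the bracket point is forward-asymptotic to `a`
  have hstab := S.stable_iter (S.eps0 / 4) (by linarith) a (S.br b a) hws
    (by rwa [dist_comm])
  -- b and the bracket point stay close forward in time
  have hclose : ∀ n : ℕ, dist (S.zp n b) (S.zp n (S.br b a)) ≤ 3 * S.eps0 / 8 := by
    intro n
    have h1 := (hstab n).2
    have h2 : S.lam0 ^ n * dist a (S.br b a) ≤ S.eps0 / 4 := by
      refine (mul_le_of_le_one_left dist_nonneg (pow_le_one₀ hl0.le hl1.le)).trans ?_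
      rwa [dist_comm]
    calc dist (S.zp n b) (S.zp n (S.br b a))
        ≤ dist (S.zp n b) (S.zp n a) + dist (S.zp n a) (S.zp n (S.br b a)) :=
          dist_triangle _ _ _
      _ ≤ S.eps0 / 8 + S.eps0 / 4 := add_le_add (by rw [dist_comm]; exact h n)
          (h1.trans h2)
      _ = 3 * S.eps0 / 8 := by ring
  have := S.unstable_rigid (3 * S.eps0 / 8) (by linarith) b (S.br b a) hwu hclose
  exact this.symm

/-- Lemma L5: a point whose `φ^p`-image is on its local stable set is forward-asymptotic
to a `φ^p`-periodic point. -/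
lemma shadow_periodic (p : ℤ) (hp : 0 < p) (δ₀ : ℝ) (hδ₀0 : 0 ≤ δ₀) (hδ₀e : δ₀ < S.eps0)
    (x : X) (hbr : S.br (S.zp p x) x = S.zp p x) (hd : dist x (S.zp p x) ≤ δ₀) :
    ∃ z : X, S.zp p z = z ∧ dist x z ≤ δ₀ * (1 - S.lam0)⁻¹ := by
  have hl0 := S.lam0_pos
  have hl1 := S.lam0_lt_one
  have hiter := S.stable_iter δ₀ hδ₀e x (S.zp p x) hbr hd
  set pn := p.toNat with hpn
  have hpn1 : 1 ≤ pn := by omega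
  have hpnz : (pn : ℤ) = p := Int.toNat_of_nonneg hp.le
  set u : ℕ → X := fun k => S.zp ((k * pn : ℕ) : ℤ) x with hu
  have hukk : ∀ k : ℕ, dist (u k) (u (k + 1)) ≤ δ₀ * S.lam0 ^ k := by
    intro k
    have h1 := (hiter (k * pn)).2
    have e1 : S.zp ((k * pn : ℕ) : ℤ) (S.zp p x) = u (k + 1) := by
      rw [← zp_add']
      simp only [hu]
      congr 1
      push_cast [← hpnz]
      ring
    rw [e1] at h1
    calc dist (u k) (u (k + 1)) ≤ S.lam0 ^ (k * pn) * dist x (S.zp p x) := h1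
      _ ≤ S.lam0 ^ k * δ₀ := by
          refine mul_le_mul (pow_le_pow_of_le_one hl0.le hl1.le ?_) hd dist_nonneg
            (pow_nonneg hl0.le _)
          exact Nat.le_mul_of_pos_right k (by omega)
      _ = δ₀ * S.lam0 ^ k := by ring
  have hcauchy : CauchySeq u := cauchySeq_of_le_geometric S.lam0 δ₀ hl1 hukk
  obtain ⟨z, hz⟩ := cauchySeq_tendsto_of_complete hcauchy
  have hzfix : S.zp p z = z := by
    have h1 : Tendsto (fun k => S.zp p (u k)) atTop (nhds (S.zp p z)) :=
      ((S.continuous_zp p).tendsto z).comp hz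
    have h2 : (fun k => S.zp p (u k)) = fun k => u (k + 1) := by
      funext k
      simp only [hu]
      rw [← zp_add']
      congr 1
      push_cast [← hpnz]
      ring
    rw [h2] at h1
    have h3 : Tendsto (fun k => u (k + 1)) atTop (nhds z) :=
      hz.comp (tendsto_add_atTop_nat 1)
    exact tendsto_nhds_unique h1 h3
  refine ⟨z, hzfix, ?_⟩
  have hu0 : u 0 = x := by simp [hu, zp_zero']
  have hxk : ∀ k : ℕ, dist x (u k) ≤ δ₀ * (1 - S.lam0)⁻¹ := by
    intro k
    have h1 : dist (u 0) (u k) ≤ ∑ i ∈ Finset.range k, dist (u i) (u (i + 1)) :=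
      dist_le_range_sum_dist u k
    have h2 : ∑ i ∈ Finset.range k, dist (u i) (u (i + 1))
        ≤ ∑ i ∈ Finset.range k, δ₀ * S.lam0 ^ i :=
      Finset.sum_le_sum (fun i _ => hukk i)
    have h3 : ∑ i ∈ Finset.range k, S.lam0 ^ i ≤ (1 - S.lam0)⁻¹ := by
      have := Summable.sum_le_tsum (Finset.range k) (fun i _ => pow_nonneg hl0.le i)
        (summable_geometric_of_lt_one hl0.le hl1)
      rwa [tsum_geometric_of_lt_one hl0.le hl1] at this
    calc dist x (u k) = dist (u 0) (u k) := by rw [hu0]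
      _ ≤ ∑ i ∈ Finset.range k, δ₀ * S.lam0 ^ i := h1.trans h2
      _ = δ₀ * ∑ i ∈ Finset.range k, S.lam0 ^ i := by rw [Finset.mul_sum]
      _ ≤ δ₀ * (1 - S.lam0)⁻¹ := mul_le_mul_of_nonneg_left h3 hδ₀0
  exact le_of_tendsto (tendsto_const_nhds.dist hz) (Filter.Eventually.of_forall hxk)

end SmaleSpace

namespace SmaleSpace

open Filter Metric

variable {X : Type*} [MetricSpace X] [CompactSpace X] (S : SmaleSpace X)

/-- the inverse Smale space `(X, φ⁻¹)`. -/
def inv : SmaleSpace X where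
  phi := S.phi.symm
  eps0 := S.eps0
  eps0_pos := S.eps0_pos
  lam0 := S.lam0
  lam0_pos := S.lam0_pos
  lam0_lt_one := S.lam0_lt_one
  br x y := S.br y x
  br_continuousOn := by
    have hswap : ContinuousOn (fun q : X × X => ((q.2, q.1) : X × X))
        {q : X × X | dist q.1 q.2 < S.eps0} := (continuous_snd.prodMk continuous_fst).continuousOn
    exact S.br_continuousOn.comp hswap (fun q hq => by
      simp only [Set.mem_setOf_eq] at hq ⊢
      rwa [dist_comm])
  br_self := S.br_self
  br_assoc₁ := fun x y z h1 h2 h3 h4 h5 =>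
    S.br_assoc₂ z y x (by rwa [dist_comm]) (by rwa [dist_comm]) (by rwa [dist_comm])
      (by rwa [dist_comm]) (by rwa [dist_comm])
  br_assoc₂ := fun x y z h1 h2 h3 h4 h5 =>
    S.br_assoc₁ z y x (by rwa [dist_comm]) (by rwa [dist_comm]) (by rwa [dist_comm])
      (by rwa [dist_comm]) (by rwa [dist_comm])
  br_phi := fun x y h1 h2 => S.br_phi_symm y x (by rwa [dist_comm]) (by rwa [dist_comm])
  contract_s := fun x ε hε hεe y z h1 h2 h3 h4 => S.contract_u x ε hε hεe y z h1 h2 h3 h4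
  contract_u := fun x ε hε hεe y z h1 h2 h3 h4 => by
    have := S.contract_s x ε hε hεe y z h1 h2 h3 h4
    simpa using this

lemma inv_zp (k : ℤ) (x : X) : S.inv.zp k x = S.zp (-k) x := by
  show ((S.phi.symm.toEquiv : Equiv.Perm X) ^ k) x = ((S.phi.toEquiv : Equiv.Perm X) ^ (-k)) x
  have h : (S.phi.symm.toEquiv : Equiv.Perm X) = (S.phi.toEquiv : Equiv.Perm X)⁻¹ := rfl
  rw [h, inv_zpow, ← zpow_neg]

lemma inv_gs : S.inv.Gs = S.Gu := by
  ext q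
  simp only [Gs, Gu, Set.mem_setOf_eq, inv_zp]

lemma inv_irred (hirr : S.Irred) : S.inv.Irred := by
  intro U V hU hV hUne hVne
  obtain ⟨K, w, ⟨⟨v, hvV, rfl⟩, hwU⟩⟩ := hirr V U hV hU hVne hUne
  refine ⟨K, v, ⟨⟨S.zp (K : ℤ) v, hwU, ?_⟩, hvV⟩⟩
  rw [inv_zp, ← zp_add']
  simp [zp_zero']

lemma gs_symm {a b : X} (h : (a, b) ∈ S.Gs) : (b, a) ∈ S.Gs := by
  simp only [Gs, Set.mem_setOf_eq] at h ⊢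
  simpa [dist_comm] using h

lemma gs_shift (k : ℤ) (a b : X) (h : (a, b) ∈ S.Gs) : (S.zp k a, S.zp k b) ∈ S.Gs := by
  simp only [Gs, Set.mem_setOf_eq] at h ⊢
  rcases le_or_gt 0 k with hk | hk
  · have heq : (fun n : ℕ => dist (S.zp (↑n) (S.zp k a)) (S.zp (↑n) (S.zp k b)))
        = (fun m : ℕ => dist (S.zp (↑m) a) (S.zp (↑m) b)) ∘ (fun n => n + k.toNat) := by
      funext n
      simp only [Function.comp_apply]
      rw [← zp_add', ← zp_add']
      have e : ((n : ℤ) + k) = ((n + k.toNat : ℕ) : ℤ) := by omega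
      rw [e]
    rw [heq]
    exact h.comp (tendsto_add_atTop_nat _)
  · have h2 : Tendsto ((fun m : ℕ => dist (S.zp (↑m) a) (S.zp (↑m) b)) ∘
        (fun n => n - (-k).toNat)) atTop (nhds 0) := h.comp (tendsto_sub_atTop_nat _)
    refine h2.congr' ?_
    filter_upwards [eventually_ge_atTop (-k).toNat] with n hn
    simp only [Function.comp_apply]
    rw [← zp_add', ← zp_add']
    have e : ((n - (-k).toNat : ℕ) : ℤ) = (n : ℤ) + k := by omega
    rw [e]

lemma gs_neg (p : ℤ) (x : X) : (S.zp p x, x) ∈ S.Gs ↔ (S.zp (-p) x, x) ∈ S.Gs := by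
  have key : ∀ (r : ℤ) (y : X), (S.zp r y, y) ∈ S.Gs → (S.zp (-r) y, y) ∈ S.Gs := by
    intro r y h
    have h2 := S.gs_shift (-r) _ _ h
    rw [← zp_add'] at h2
    simp only [neg_add_cancel, zp_zero'] at h2
    exact S.gs_symm h2
  constructor
  · exact key p x
  · intro h
    have := key (-p) x h
    rwa [neg_neg] at this

/-- the key lemma: for `p > 0`, the set of points stably equivalent to their image
under `φ^p` has empty interior. -/
lemma key_pos (hirr : S.Irred) (hinf : Infinite X) (p : ℤ) (hp : 0 < p) :
    interior {x : X | (S.zp p x, x) ∈ S.Gs} = ∅ := by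
  by_contra hne
  obtain ⟨δA, hδA0, hδA8, hbrd⟩ := S.exists_br_delta
  have he := S.eps0_pos
  have hl0 := S.lam0_pos
  have hl1 := S.lam0_lt_one
  set pn := p.toNat with hpndef
  have hpnz : (pn : ℤ) = p := Int.toNat_of_nonneg hp.le
  by_cases hPu : ∀ z : X, S.zp p z = z
  · -- `φ^p = id`: contradiction with `X` infinite
    have hPu' : ∀ z : X, S.zp (-p) z = z := by
      intro z
      calc S.zp (-p) z = S.zp (-p) (S.zp p z) := by rw [hPu z]
        _ = S.zp (-p + p) z := (S.zp_add' _ _ z).symm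
        _ = z := by simp [zp_zero']
    have hpow1 : S.lam0 ^ pn < 1 := pow_lt_one₀ hl0.le hl1 (by omega)
    have hsingle : ∀ x y : X, dist x y < δA → x = y := by
      intro x y hxy
      have hw1 : dist (S.br x y) x < S.eps0 / 8 := hbrd x y hxy
      have hw2 : dist (S.br x y) y ≤ S.eps0 / 4 := by
        calc dist (S.br x y) y ≤ dist (S.br x y) x + dist x y := dist_triangle _ _ _
          _ ≤ S.eps0 / 8 + δA := add_le_add hw1.le hxy.le
          _ ≤ S.eps0 / 4 := by linarith
      have hxye : dist x y < S.eps0 := lt_of_lt_of_le hxy (by linarith)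
      have hws : S.br (S.br x y) y = S.br x y :=
        S.br_assoc₁ x y y hxye (by simpa using he) hxye
          (lt_of_le_of_lt hw2 (by linarith))
          (by rw [S.br_self]; exact hxye)
      have hwu : S.br x (S.br x y) = S.br x y :=
        S.br_assoc₂ x x y (by simpa using he) hxye hxye
          (by rw [S.br_self]; exact hxye)
          (by rw [dist_comm]; exact lt_of_le_of_lt hw1.le (by linarith))
      -- stable side: w = y
      have hst := (S.stable_iter (S.eps0 / 4) (by linarith) y (S.br x y) hws
        (by rw [dist_comm]; exact hw2) pn).2
      rw [hpnz, hPu, hPu] at hst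
      have hy : dist y (S.br x y) ≤ 0 := by
        nlinarith [dist_nonneg (x := y) (y := S.br x y)]
      have hwy : S.br x y = y := (dist_le_zero.mp hy).symm
      -- unstable side: w = x
      have hxw : dist x (S.br x y) ≤ S.eps0 / 4 := by
        rw [dist_comm]; exact hw1.le.trans (by linarith)
      have hun := (S.unstable_iter (S.eps0 / 4) (by linarith) x (S.br x y) hwu hxw pn).2
      rw [hpnz, hPu', hPu'] at hun
      have hx : dist x (S.br x y) ≤ 0 := by
        nlinarith [dist_nonneg (x := x) (y := S.br x y)]
      have hwx : S.br x y = x := (dist_le_zero.mp hx).symm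
      rw [← hwy, hwx]
    obtain ⟨t, -, htf, hcover⟩ :=
      finite_cover_balls_of_compact (s := (Set.univ : Set X)) isCompact_univ hδA0
    have huniv : (Set.univ : Set X) ⊆ ⋃ x ∈ t, {x} := by
      refine hcover.trans ?_
      refine Set.iUnion₂_mono fun c _ => ?_
      intro z hz
      simp only [Set.mem_singleton_iff]
      exact hsingle z c hz
    have hfin : (Set.univ : Set X).Finite :=
      Set.Finite.subset (htf.biUnion (fun c _ => Set.finite_singleton c)) huniv
    haveI := Set.finite_univ_iff.mp hfin
    exact not_finite X
  · push_neg at hPu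
    obtain ⟨y₀, hy₀⟩ := hPu
    have hPc : IsClosed {z : X | S.zp p z = z} := isClosed_eq (S.continuous_zp p) continuous_id
    have hy₀c : y₀ ∈ {z : X | S.zp p z = z}ᶜ := hy₀
    obtain ⟨ρ, hρ0, hρ⟩ := Metric.isOpen_iff.mp hPc.isOpen_compl y₀ hy₀c
    set δ₀ : ℝ := min (δA / 2) ((1 - S.lam0) * ρ / 4) with hδ₀def
    have hδ₀0 : 0 < δ₀ := lt_min (by linarith) (by nlinarith)
    have hδ₀A : δ₀ < δA := lt_of_le_of_lt (min_le_left _ _) (by linarith)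
    have hδ₀M : δ₀ * (1 - S.lam0)⁻¹ ≤ ρ / 4 := by
      have h1 : δ₀ ≤ (1 - S.lam0) * ρ / 4 := min_le_right _ _
      have h2 : (0 : ℝ) < (1 - S.lam0)⁻¹ := inv_pos.mpr (by linarith)
      have h3 : (1 - S.lam0) ≠ 0 := by linarith
      calc δ₀ * (1 - S.lam0)⁻¹ ≤ ((1 - S.lam0) * ρ / 4) * (1 - S.lam0)⁻¹ := by
            exact mul_le_mul_of_nonneg_right h1 h2.le
        _ = ρ / 4 * ((1 - S.lam0) * (1 - S.lam0)⁻¹) := by ring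
        _ = ρ / 4 := by rw [mul_inv_cancel₀ h3, mul_one]
    obtain ⟨x₀, hx₀⟩ := Set.nonempty_iff_ne_empty.mpr hne
    set A := {x : X | (S.zp p x, x) ∈ S.Gs} with hA
    set U := interior A with hU
    have hUo : IsOpen U := isOpen_interior
    have hUA : U ⊆ A := interior_subset
    -- Baire category step
    set C : ℕ → Set X := fun m =>
      {x | ∀ n : ℕ, m ≤ n → dist (S.zp ((n : ℤ) + p) x) (S.zp (n : ℤ) x) ≤ δ₀} with hC
    have hCclosed : ∀ m, IsClosed (C m) := by
      intro m
      have : C m = ⋂ (n : ℕ), ⋂ (_ : m ≤ n),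
          {x : X | dist (S.zp ((n : ℤ) + p) x) (S.zp (n : ℤ) x) ≤ δ₀} := by
        ext x
        simp [hC]
      rw [this]
      exact isClosed_iInter fun n => isClosed_iInter fun _ =>
        isClosed_le ((S.continuous_zp _).dist (S.continuous_zp _)) continuous_const
    have hcover : ⋃ m, (C m ∪ Uᶜ) = Set.univ := by
      ext x
      simp only [Set.mem_iUnion, Set.mem_union, Set.mem_univ, iff_true]
      by_cases hx : x ∈ U
      · have hAx : (S.zp p x, x) ∈ S.Gs := hUA hx
        have ht : Tendsto (fun n : ℕ => dist (S.zp (n : ℤ) (S.zp p x)) (S.zp (n : ℤ) x))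
            atTop (nhds 0) := hAx
        have hev := ht.eventually (gt_mem_nhds hδ₀0)
        obtain ⟨N, hN⟩ := eventually_atTop.mp hev
        refine ⟨N, Or.inl fun n hn => ?_⟩
        have := (hN n hn).le
        rwa [← zp_add'] at this
      · exact ⟨0, Or.inr hx⟩
    have hdense := dense_iUnion_interior_of_closed
      (fun m => (hCclosed m).union hUo.isClosed_compl) hcover
    obtain ⟨y₁, hy₁mem, hy₁U⟩ := hdense.exists_mem_open hUo ⟨x₀, hx₀⟩
    obtain ⟨m, hy₁s⟩ := Set.mem_iUnion.mp hy₁mem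
    set W₀ := U ∩ interior (C m ∪ Uᶜ) with hW₀
    have hW₀o : IsOpen W₀ := hUo.inter isOpen_interior
    have hW₀ne : W₀.Nonempty := ⟨y₁, hy₁U, hy₁s⟩
    have hW₀C : W₀ ⊆ C m := by
      intro x hx
      rcases interior_subset hx.2 with h | h
      · exact h
      · exact absurd hx.1 h
    set W₁ := S.zp (m : ℤ) '' W₀ with hW₁
    have hW₁o : IsOpen W₁ := S.isOpenMap_zp (m : ℤ) W₀ hW₀o
    have hW₁ne : W₁.Nonempty := hW₀ne.image _
    set Good : X → Prop := fun x =>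
      ∀ n : ℕ, dist (S.zp ((n : ℤ) + p) x) (S.zp (n : ℤ) x) ≤ δ₀ with hGood
    have hW₁Good : ∀ x ∈ W₁, Good x := by
      rintro - ⟨x, hx, rfl⟩ n
      have h1 := hW₀C hx (n + m) (le_add_self)
      rw [← zp_add', ← zp_add']
      have e1 : ((n : ℤ) + p + m) = (((n + m : ℕ) : ℤ) + p) := by push_cast; ring
      have e2 : ((n : ℤ) + m) = ((n + m : ℕ) : ℤ) := by push_cast; ring
      rw [e1, e2]
      exact h1
    have hGoodfwd : ∀ x, Good x → ∀ j : ℕ, Good (S.zp (j : ℤ) x) := by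
      intro x hx j n
      rw [← zp_add', ← zp_add']
      have h1 := hx (n + j)
      have e1 : ((n : ℤ) + p + j) = (((n + j : ℕ) : ℤ) + p) := by push_cast; ring
      have e2 : ((n : ℤ) + j) = ((n + j : ℕ) : ℤ) := by push_cast; ring
      rw [e1, e2]
      exact h1
    have hGoodP : ∀ x, Good x → ∃ z, S.zp p z = z ∧ dist x z ≤ δ₀ * (1 - S.lam0)⁻¹ := by
      intro x hx
      have h0 : dist x (S.zp p x) ≤ δ₀ := by
        have := hx 0
        simp only [Nat.cast_zero, zero_add, zp_zero'] at this
        rwa [dist_comm]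
      have hδ₀e8 : δ₀ < S.eps0 / 8 := lt_of_lt_of_le hδ₀A hδA8
      have hcl : ∀ n : ℕ, dist (S.zp (n : ℤ) x) (S.zp (n : ℤ) (S.zp p x)) ≤ S.eps0 / 8 := by
        intro n
        rw [← zp_add']
        have h1 := hx n
        rw [dist_comm] at h1
        have e1 : ((n : ℤ) + p) = ((n : ℤ) + p) := rfl
        exact h1.trans (by linarith)
      have hbr := S.forward_close δA hδA0 hδA8 hbrd x (S.zp p x)
        (lt_of_le_of_lt h0 hδ₀A) hcl
      exact S.shadow_periodic p hp δ₀ hδ₀0.le (by linarith) x hbr h0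
    obtain ⟨K, v, hv1, hv2⟩ := hirr W₁ (Metric.ball y₀ (ρ / 2)) hW₁o Metric.isOpen_ball
      hW₁ne ⟨y₀, Metric.mem_ball_self (by linarith)⟩
    obtain ⟨w, hwW₁, rfl⟩ := hv1
    have hvGood : Good (S.zp (K : ℤ) w) := hGoodfwd w (hW₁Good w hwW₁) K
    obtain ⟨z, hzP, hzd⟩ := hGoodP _ hvGood
    have hzball : z ∈ Metric.ball y₀ ρ := by
      rw [Metric.mem_ball] at hv2 ⊢
      calc dist z y₀ ≤ dist z (S.zp (K : ℤ) w) + dist (S.zp (K : ℤ) w) y₀ := dist_triangle _ _ _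
        _ ≤ δ₀ * (1 - S.lam0)⁻¹ + dist (S.zp (K : ℤ) w) y₀ := by
            rw [dist_comm]; exact add_le_add_left hzd _
        _ < ρ / 4 + ρ / 2 := by
            have := Metric.mem_ball.mp hv2
            exact add_lt_add_of_le_of_lt hδ₀M this
        _ < ρ := by linarith
    exact hρ hzball hzP

lemma key_ne (hirr : S.Irred) (hinf : Infinite X) (p : ℤ) (hp : p ≠ 0) :
    interior {x : X | (S.zp p x, x) ∈ S.Gs} = ∅ := by
  rcases hp.lt_or_gt with h | h
  · have hset : {x : X | (S.zp p x, x) ∈ S.Gs} = {x : X | (S.zp (-p) x, x) ∈ S.Gs} :=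
      Set.ext fun x => S.gs_neg p x
    rw [hset]
    exact S.key_pos hirr hinf (-p) (by omega)
  · exact S.key_pos hirr hinf p h

end SmaleSpace

/-- if a Smale space `(X,φ)` is irreducible and `X` is infinite, then
`(X,φ)` is `(s,u)`-essentially free: for every `(p,q) ∈ ℤ²` with `(p,q) ≠ (0,0)`,
the interior of `{x ∈ X : (φ^p(x), x) ∈ G_φ^s and (φ^q(x), x) ∈ G_φ^u}` is empty. -/
theorem su_essentially_free_of_irreducible {X : Type*} [MetricSpace X]
    [CompactSpace X] (S : SmaleSpace X) (hirr : S.Irred) (hinf : Infinite X) :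
    ∀ p q : ℤ, (p, q) ≠ (0, 0) →
      interior {x : X | (S.zp p x, x) ∈ S.Gs ∧ (S.zp q x, x) ∈ S.Gu} = ∅ := by
  intro p q hpq
  by_cases hp : p = 0
  · subst hp
    have hq : q ≠ 0 := fun h => hpq (by rw [h])
    have hGu : interior {x : X | (S.zp q x, x) ∈ S.Gu} = ∅ := by
      have hset : {x : X | (S.zp q x, x) ∈ S.Gu}
          = {x : X | (S.inv.zp (-q) x, x) ∈ S.inv.Gs} := by
        ext x
        simp only [Set.mem_setOf_eq]
        rw [S.inv_gs, S.inv_zp, neg_neg]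
      rw [hset]
      exact S.inv.key_ne (S.inv_irred hirr) hinf (-q) (by omega)
    have hsub : {x : X | (S.zp 0 x, x) ∈ S.Gs ∧ (S.zp q x, x) ∈ S.Gu}
        ⊆ {x : X | (S.zp q x, x) ∈ S.Gu} := fun x hx => hx.2
    exact Set.subset_empty_iff.mp (hGu ▸ interior_mono hsub)
  · have hGs : interior {x : X | (S.zp p x, x) ∈ S.Gs} = ∅ :=
      S.key_ne hirr hinf p hp
    have hsub : {x : X | (S.zp p x, x) ∈ S.Gs ∧ (S.zp q x, x) ∈ S.Gu}
        ⊆ {x : X | (S.zp p x, x) ∈ S.Gs} := fun x hx => hx.1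
    exact Set.subset_empty_iff.mp (hGs ▸ interior_mono hsub)
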